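/- arXiv:2212.07106 — 3 statements merged into one kernel-verified Lean document; each statement's English description precedes it below -/
import Mathlib

section
/- Let A be the adjacency matrix of a strongly regular graph with parameters (q^{2ν}, (q^ν-1)(q^{ν+e-1}+1), q^{2(ν+e-1)}+q^ν-q^{ν+e-1}-2, q^{ν+e-1}(q^{ν+e-1}+1)), and let N = c·I + d·A with c = ∏_{t=1}^{ν}(q^{t+e-1}+1) and d = ∏_{t=1}^{ν-1}(q^{t+e-1}+1). Then N has rank (q^ν - 1)(q^{ν-1+e} + 1) + 1 over the reals. -/
open Matrix

/-- Auxiliary: if `(A - s)(A - r) = τ J` and `AJ = kJ` with `(s-k)(s-r) ≠ 0`, then the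
dimension of `ker (A - s)` is given by a trace formula. -/
lemma aux_ker_finrank {X : Type*} [Fintype X] [DecidableEq X]
    (A J : Matrix X X ℝ) (k s r τ : ℝ)
    (hquad : (A - s • (1 : Matrix X X ℝ)) * (A - r • 1) = τ • J)
    (hAJ : A * J = k • J)
    (hD : (s - k) * (s - r) ≠ 0) :
    ((Module.finrank ℝ (LinearMap.ker (A - s • (1 : Matrix X X ℝ)).mulVecLin)) : ℝ)
      = ((s - k) * (s - r))⁻¹ *
        (Matrix.trace (A * A) - (k + r) * Matrix.trace A + k * r * (Fintype.card X)) := by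
  have hexp : ∀ x y : ℝ, (A - x • (1 : Matrix X X ℝ)) * (A - y • 1)
      = A * A - (x + y) • A + (x * y) • 1 := by
    intro x y
    simp only [Matrix.sub_mul, Matrix.mul_sub, Matrix.smul_mul, Matrix.mul_smul, one_mul,
      mul_one, smul_smul]
    module
  have hswap : ∀ x y : ℝ, (A - x • (1 : Matrix X X ℝ)) * (A - y • 1)
      = (A - y • 1) * (A - x • 1) := by
    intro x y
    rw [hexp, hexp]
    module
  have hKJ : (A - k • (1 : Matrix X X ℝ)) * J = 0 := by
    rw [Matrix.sub_mul, hAJ, Matrix.smul_mul, one_mul, sub_self]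
  have hcubic : (A - k • (1 : Matrix X X ℝ)) * ((A - s • 1) * (A - r • 1)) = 0 := by
    rw [hquad, Matrix.mul_smul, hKJ, smul_zero]
  have hKRB : (A - k • (1 : Matrix X X ℝ)) * (A - r • 1)
      = (A - s • 1) * (A - s • 1) - ((k - s) + (r - s)) • (A - s • 1)
        + ((s - k) * (s - r)) • 1 := by
    rw [hexp, hexp]
    module
  set B := A - s • (1 : Matrix X X ℝ) with hB
  set W := B - ((k - s) + (r - s)) • (1 : Matrix X X ℝ) with hW
  have hBW : B * W = B * B - ((k - s) + (r - s)) • B := by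
    rw [hW, Matrix.mul_sub, Matrix.mul_smul, mul_one]
  have hWB : W * B = B * B - ((k - s) + (r - s)) • B := by
    rw [hW, Matrix.sub_mul, Matrix.smul_mul, one_mul]
  have hsplit : (A - k • (1 : Matrix X X ℝ)) * (A - r • 1)
      = B * W + ((s - k) * (s - r)) • 1 := by
    rw [hKRB, hBW]
  set E := ((s - k) * (s - r))⁻¹ • ((A - k • (1 : Matrix X X ℝ)) * (A - r • 1)) with hE
  have hBE : B * ((A - k • (1 : Matrix X X ℝ)) * (A - r • 1)) = 0 := by
    rw [hB, ← Matrix.mul_assoc, hswap s k, Matrix.mul_assoc, hcubic]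
  have hproj : LinearMap.IsProj (LinearMap.ker B.mulVecLin) E.mulVecLin := by
    constructor
    · intro x
      rw [LinearMap.mem_ker]
      show B.mulVec (E.mulVec x) = 0
      rw [Matrix.mulVec_mulVec, hE, Matrix.mul_smul, hBE, smul_zero, Matrix.zero_mulVec]
    · intro x hx
      have hx' : B.mulVec x = 0 := hx
      show E.mulVec x = x
      rw [hE, Matrix.smul_mulVec, hsplit, Matrix.add_mulVec,
        Matrix.smul_mulVec, Matrix.one_mulVec]
      have h0 : (B * W).mulVec x = 0 := by
        rw [show B * W = W * B from by rw [hBW, hWB], ← Matrix.mulVec_mulVec, hx',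
          Matrix.mulVec_zero]
      rw [h0, zero_add, smul_smul, inv_mul_cancel₀ hD, one_smul]
  have htrace := hproj.trace
  have hlt : LinearMap.trace ℝ (X → ℝ) E.mulVecLin = Matrix.trace E := by
    rw [← Matrix.toLin'_apply' E, LinearMap.trace_eq_matrix_trace ℝ (Pi.basisFun ℝ X),
      LinearMap.toMatrix_eq_toMatrix', LinearMap.toMatrix'_toLin']
  have htrKR : Matrix.trace ((A - k • (1 : Matrix X X ℝ)) * (A - r • 1))
      = Matrix.trace (A * A) - (k + r) * Matrix.trace A + k * r * (Fintype.card X) := by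
    rw [hexp, Matrix.trace_add, Matrix.trace_sub, Matrix.trace_smul, Matrix.trace_smul,
      Matrix.trace_one]
    simp only [smul_eq_mul]
  rw [← htrace, hlt, hE, Matrix.trace_smul, htrKR, smul_eq_mul]

/-- If `A` is the adjacency matrix of a strongly regular graph with the stated
parameters and `N = c•I + d•A` with the stated products, then
`rank N = (q^ν - 1)(q^{ν-1+e} + 1) + 1`. -/
theorem stmt_2 {X : Type*} [Fintype X] [DecidableEq X]
    (G : SimpleGraph X) [DecidableRel G.Adj]
    (q ν : ℕ) (hq : ∃ p n : ℕ, p.Prime ∧ q = p ^ n) (hν : 1 ≤ ν)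
    (e : ℝ) (he : e = 0 ∨ e = 1/2)
    (n k ℓ μ : ℕ)
    (hn : (n : ℝ) = (q : ℝ) ^ (2 * ν))
    (hk : (k : ℝ) = ((q : ℝ) ^ (ν : ℝ) - 1) * ((q : ℝ) ^ ((ν : ℝ) + e - 1) + 1))
    (hℓ : (ℓ : ℝ) = (q : ℝ) ^ (2 * ((ν : ℝ) + e - 1)) + (q : ℝ) ^ (ν : ℝ)
        - (q : ℝ) ^ ((ν : ℝ) + e - 1) - 2)
    (hμ : (μ : ℝ) = (q : ℝ) ^ ((ν : ℝ) + e - 1) * ((q : ℝ) ^ ((ν : ℝ) + e - 1) + 1))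
    (hsrg : G.IsSRGWith n k ℓ μ)
    (c d : ℝ)
    (hc : c = ∏ t ∈ Finset.Icc 1 ν, ((q : ℝ) ^ ((t : ℝ) + e - 1) + 1))
    (hd : d = ∏ t ∈ Finset.Icc 1 (ν - 1), ((q : ℝ) ^ ((t : ℝ) + e - 1) + 1))
    (N : Matrix X X ℝ)
    (hN : N = c • (1 : Matrix X X ℝ) + d • G.adjMatrix ℝ) :
    (N.rank : ℝ) = ((q : ℝ) ^ (ν : ℝ) - 1) * ((q : ℝ) ^ ((ν : ℝ) - 1 + e) + 1) + 1 := by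
  classical
  obtain ⟨p, m, hp, hqpm⟩ := hq
  have hq0 : (0 : ℝ) < (q : ℝ) := by
    have h1 : 1 ≤ q := by rw [hqpm]; exact Nat.one_le_pow _ _ hp.pos
    exact_mod_cast Nat.lt_of_lt_of_le Nat.zero_lt_one h1
  set a : ℝ := (q : ℝ) ^ ((ν : ℝ) + e - 1) with ha_def
  set b : ℝ := (q : ℝ) ^ (ν : ℝ) with hb_def
  have ha0 : 0 < a := Real.rpow_pos_of_pos hq0 _
  have hb0 : 0 < b := Real.rpow_pos_of_pos hq0 _
  have haa : a * a = (q : ℝ) ^ (2 * ((ν : ℝ) + e - 1)) := by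
    rw [ha_def, ← Real.rpow_add hq0]
    ring_nf
  have hbnat : b = ((q : ℝ)) ^ (ν : ℕ) := Real.rpow_natCast _ _
  have hn' : (n : ℝ) = b * b := by
    rw [hn, hbnat, ← pow_add]
    ring_nf
  have hk' : (k : ℝ) = (b - 1) * (a + 1) := hk
  have hℓ' : (ℓ : ℝ) = a * a + b - a - 2 := by rw [hℓ, ← haa]
  have hμ' : (μ : ℝ) = a * (a + 1) := hμ
  -- the eigenvalues
  set s : ℝ := -(a + 1) with hs_def
  set r : ℝ := b - a - 1 with hr_def
  set A := G.adjMatrix ℝ with hA_def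
  set J : Matrix X X ℝ := Matrix.of (fun _ _ => 1) with hJ_def
  have hcompl : Gᶜ.adjMatrix ℝ = J - 1 - A := by
    ext i j
    by_cases hij : i = j
    · subst hij
      simp [hJ_def, hA_def]
    · by_cases hadj : G.Adj i j <;>
        simp [hJ_def, hA_def, Matrix.one_apply, hij, hadj]
  have hA2 : A * A = (k : ℝ) • (1 : Matrix X X ℝ) + (ℓ : ℝ) • A + (μ : ℝ) • (J - 1 - A) := by
    have h := hsrg.matrix_eq (α := ℝ)
    rw [pow_two, hcompl] at h
    simpa [← Nat.cast_smul_eq_nsmul ℝ] using h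
  have hAJ : A * J = (k : ℝ) • J := by
    ext i j
    simp [hJ_def, hA_def, hsrg.regular i]
  have hquad : (A - s • (1 : Matrix X X ℝ)) * (A - r • 1) = (μ : ℝ) • J := by
    have hexp : (A - s • (1 : Matrix X X ℝ)) * (A - r • 1)
        = A * A - (s + r) • A + (s * r) • 1 := by
      simp only [Matrix.sub_mul, Matrix.mul_sub, Matrix.smul_mul, Matrix.mul_smul, one_mul,
        mul_one, smul_smul]
      module
    rw [hexp, hA2]
    have e1 : (k : ℝ) = (μ : ℝ) - s * r := by rw [hk', hμ', hs_def, hr_def]; ring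
    have e2 : (ℓ : ℝ) = (μ : ℝ) + (s + r) := by rw [hℓ', hμ', hs_def, hr_def]; ring
    rw [e1, e2]
    module
  have hD : (s - (k : ℝ)) * (s - r) = (a + 1) * (b * b) := by
    rw [hk', hs_def, hr_def]; ring
  have hD0 : (s - (k : ℝ)) * (s - r) ≠ 0 := by
    rw [hD]; positivity
  have hker := aux_ker_finrank A J (k : ℝ) s r (μ : ℝ) hquad hAJ hD0
  -- trace computations
  have hcard : (Fintype.card X : ℝ) = (n : ℝ) := by exact_mod_cast hsrg.card
  have htrA : Matrix.trace A = 0 := by rw [hA_def]; exact SimpleGraph.trace_adjMatrix ℝ G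
  have htrAA : Matrix.trace (A * A) = (n : ℝ) * (k : ℝ) := by
    have hdiag : ∀ i, (A * A) i i = (k : ℝ) := by
      intro i
      rw [hA_def, SimpleGraph.adjMatrix_mul_self_apply_self, hsrg.regular i]
    rw [Matrix.trace]
    simp only [Matrix.diag]
    rw [Finset.sum_congr rfl (fun i _ => hdiag i), Finset.sum_const, Finset.card_univ,
      nsmul_eq_mul, hcard]
  -- N = d • (A - s • 1)
  have hsucc : ν - 1 + 1 = ν := Nat.succ_pred_eq_of_pos hν
  have hcd : c = d * (a + 1) := by
    rw [hc, ← hsucc, Finset.prod_Icc_succ_top (by omega), hsucc, ← hd, ← ha_def]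
  have hd0 : d ≠ 0 := by
    rw [hd]
    apply ne_of_gt
    apply Finset.prod_pos
    intro t _
    have := Real.rpow_pos_of_pos hq0 ((t : ℝ) + e - 1)
    linarith
  have hNB : N = d • (A - s • (1 : Matrix X X ℝ)) := by
    rw [hN, hcd, hs_def, hA_def]
    module
  have hkerN : LinearMap.ker N.mulVecLin
      = LinearMap.ker (A - s • (1 : Matrix X X ℝ)).mulVecLin := by
    have hml : N.mulVecLin = d • (A - s • (1 : Matrix X X ℝ)).mulVecLin := by
      ext v i
      rw [hNB]
      simp [Matrix.smul_mulVec]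
    rw [hml, LinearMap.ker_smul _ d hd0]
  have hrn : (N.rank : ℝ)
      + (Module.finrank ℝ (LinearMap.ker (A - s • (1 : Matrix X X ℝ)).mulVecLin) : ℝ)
      = (Fintype.card X : ℝ) := by
    rw [← hkerN]
    have := LinearMap.finrank_range_add_finrank_ker N.mulVecLin
    rw [Module.finrank_pi ℝ] at this
    rw [Matrix.rank]
    exact_mod_cast this
  -- final arithmetic
  have hexpfix : (q : ℝ) ^ ((ν : ℝ) - 1 + e) = a := by
    rw [ha_def]
    norm_num
    ring_nf
  rw [hexpfix]
  rw [hker, htrA, htrAA, hcard, hD, hn', hk', hr_def] at hrn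
  have : (N.rank : ℝ) = b * b - ((a + 1) * (b * b))⁻¹ *
      (b * b * ((b - 1) * (a + 1)) - ((b - 1) * (a + 1) + (b - a - 1)) * 0
        + (b - 1) * (a + 1) * (b - a - 1) * (b * b)) := by linarith
  rw [this]
  field_simp
  ring
end

section
/- Any intersecting family ℱ of maximal totally isotropic flats in the classical affine space ACG(2ν, F_q) satisfies |ℱ| ≤ ∏_{i=1}^{ν}(q^{i+e-1}+1). -/
/-- Two cosets of the same subspace that intersect are equal. -/
lemma aux_coset_eq_of_inter {𝔽 V : Type*} [Field 𝔽] [AddCommGroup V] [Module 𝔽 V]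
    {P : Submodule 𝔽 V} {x y : V}
    (h : (((· + x) '' (P : Set V)) ∩ ((· + y) '' (P : Set V))).Nonempty) :
    (· + x) '' (P : Set V) = (· + y) '' (P : Set V) := by
  obtain ⟨z, ⟨p, hp, hpx⟩, ⟨p', hp', hpy⟩⟩ := h
  have hpx' : p + x = z := hpx
  have hpy' : p' + y = z := hpy
  have h1 : x + p = p' + y := by rw [add_comm]; rw [hpx', hpy']
  have hxy : x = p' - p + y := by
    have h2 : x = p' + y - p := eq_sub_of_add_eq h1
    rw [h2]; abel
  ext v
  constructor
  · rintro ⟨w, hw, rfl⟩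
    exact ⟨w + (p' - p), P.add_mem hw (P.sub_mem hp' hp), by rw [hxy]; abel⟩
  · rintro ⟨w, hw, rfl⟩
    exact ⟨w - (p' - p), P.sub_mem hw (P.sub_mem hp' hp), by rw [hxy]; abel⟩

/-- A coset determines its direction subspace. -/
lemma aux_coset_dir {𝔽 V : Type*} [Field 𝔽] [AddCommGroup V] [Module 𝔽 V]
    {P P' : Submodule 𝔽 V} {x y : V}
    (h : (· + x) '' (P : Set V) = (· + y) '' (P' : Set V)) : P ≤ P' := by
  have hx : x ∈ (· + y) '' (P' : Set V) := h ▸ ⟨0, P.zero_mem, by simp⟩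
  obtain ⟨p', hp', hpy⟩ := hx
  intro v hv
  have hvx : v + x ∈ (· + y) '' (P' : Set V) := h ▸ ⟨v, hv, rfl⟩
  obtain ⟨w, hw, hwy⟩ := hvx
  have hwy' : w + y = v + x := hwy
  have hpy' : p' + y = x := hpy
  rw [← hpy', ← add_assoc] at hwy'
  have h4 := add_right_cancel hwy'
  have h5 : w - p' = v := by simp [h4]
  exact h5 ▸ P'.sub_mem hw hp'

/-- Any intersecting family `ℱ` of maximal totally isotropic flats in the classical
affine space `ACG(2ν, F_q)` satisfies `|ℱ| ≤ ∏_{i=1}^{ν} (q^{i+e-1} + 1)`. -/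
theorem stmt_8 {𝔽 V : Type*} [Field 𝔽] [Fintype 𝔽] [AddCommGroup V] [Module 𝔽 V]
    [FiniteDimensional 𝔽 V] (q ν : ℕ) (e : ℝ)
    (he : e = 1 ∨ e = 1/2 ∨ e = 0)
    (hq : Fintype.card 𝔽 = q) (hV : Module.finrank 𝔽 V = 2 * ν) (hν : 1 ≤ ν)
    (ℳ : Set (Submodule 𝔽 V))
    (hdim : ∀ P ∈ ℳ, Module.finrank 𝔽 P = ν)
    (hM : (Nat.card ℳ : ℝ) = ∏ i ∈ Finset.Icc 1 ν, ((q : ℝ) ^ ((i : ℝ) + e - 1) + 1))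
    (𝒪 : Set (Set V))
    (h𝒪 : 𝒪 = {s | ∃ P ∈ ℳ, ∃ x, s = (· + x) '' (P : Set V)})
    (ℱ : Set (Set V)) (hℱ : ℱ ⊆ 𝒪)
    (hint : ∀ F ∈ ℱ, ∀ F' ∈ ℱ, (F ∩ F').Nonempty) :
    (Nat.card ℱ : ℝ) ≤ ∏ i ∈ Finset.Icc 1 ν, ((q : ℝ) ^ ((i : ℝ) + e - 1) + 1) := by
  classical
  have hVfin : Finite V := Module.finite_of_finite 𝔽
  have hmem : ∀ F : ℱ, ∃ P ∈ ℳ, ∃ x, (F : Set V) = (· + x) '' (P : Set V) := by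
    intro F
    have := hℱ F.2
    rw [h𝒪] at this
    exact this
  choose P hPℳ x hx using hmem
  have hinj : Function.Injective (fun F : ℱ => (⟨P F, hPℳ F⟩ : ℳ)) := by
    intro F F' hFF'
    have hPeq : P F = P F' := congrArg Subtype.val hFF'
    have hne : ((F : Set V) ∩ (F' : Set V)).Nonempty := hint F F.2 F' F'.2
    rw [hx F, hx F', ← hPeq] at hne
    have : (· + x F) '' ((P F : Submodule 𝔽 V) : Set V)
        = (· + x F') '' ((P F : Submodule 𝔽 V) : Set V) := aux_coset_eq_of_inter hne
    apply Subtype.ext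
    rw [hx F, hx F', ← hPeq, this]
  have hle : Nat.card ℱ ≤ Nat.card ℳ := Nat.card_le_card_of_injective _ hinj
  rw [← hM]
  exact_mod_cast hle
end

section
/- In the maximal totally isotropic flat scheme 𝔛(𝒪_ν), the valencies are v_{(i,0)} = q^{i(i+2e+1)/2} · [ν choose i]_q and v_{(i,1)} = (q^{ν-i}-1) · q^{i(i+2e+1)/2} · [ν choose i]_q, where [ν choose i]_q is the Gaussian binomial coefficient. -/
/-- Gaussian binomial coefficient `[n choose k]_q` (real base). -/
noncomputable def gaussBinomR (q : ℝ) (n k : ℕ) : ℝ :=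
  ∏ j ∈ Finset.range k, (q ^ (n - k + j + 1) - 1) / (q ^ (j + 1) - 1)

section Aux

variable {𝔽 V : Type*} [Field 𝔽] [Fintype 𝔽] [AddCommGroup V] [Module 𝔽 V] [Fintype V]

/-- A coset `Q + y` is the preimage of a point of the quotient. -/
lemma coset_eq_preimage (Q : Submodule 𝔽 V) (y : V) :
    (· + y) '' (Q : Set V) =
      Submodule.Quotient.mk ⁻¹' {(Submodule.Quotient.mk y : V ⧸ Q)} := by
  ext v
  simp only [Set.mem_image, SetLike.mem_coe, Set.mem_preimage, Set.mem_singleton_iff,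
    Submodule.Quotient.eq]
  constructor
  · rintro ⟨a, ha, rfl⟩
    simpa using ha
  · intro hv
    exact ⟨v - y, hv, by abel⟩

lemma preimage_singleton_injective {α β : Type*} {f : α → β} (hf : Function.Surjective f) :
    Function.Injective (fun b => f ⁻¹' {b}) := by
  intro b₁ b₂ h
  obtain ⟨a, rfl⟩ := hf b₁
  have h' : f ⁻¹' {f a} = f ⁻¹' {b₂} := h
  have ha : a ∈ f ⁻¹' {b₂} := by rw [← h']; exact rfl
  exact ha

lemma meet_iff (P Q : Submodule 𝔽 V) (x y : V) :
    (((· + x) '' (P : Set V)) ∩ ((· + y) '' (Q : Set V))).Nonempty ↔ y - x ∈ P ⊔ Q := by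
  constructor
  · rintro ⟨v, ⟨p, hp, rfl⟩, qv, hqv, hq⟩
    rw [Submodule.mem_sup]
    refine ⟨p, hp, -qv, neg_mem hqv, ?_⟩
    have hq' : qv + y = p + x := hq
    have : y = p + x - qv := by rw [← hq']; abel
    rw [this]; abel
  · rw [Submodule.mem_sup]
    rintro ⟨p, hp, qv, hqv, hpq⟩
    refine ⟨p + x, ⟨p, hp, rfl⟩, ⟨-qv, neg_mem hqv, ?_⟩⟩
    show -qv + y = p + x
    have : p = y - x - qv := by rw [← hpq]; abel
    rw [this]; abel

/-- The set of cosets of `Q` meeting `P + x`, as an image in the quotient. -/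
lemma meet_cosets_eq (P Q : Submodule 𝔽 V) (x : V) :
    {s : Set V | (∃ y, s = (· + y) '' (Q : Set V)) ∧
        (((· + x) '' (P : Set V)) ∩ s).Nonempty}
      = (fun c => Submodule.Quotient.mk ⁻¹' {c}) ''
          ((· + (Submodule.Quotient.mk x : V ⧸ Q)) '' ((P ⊔ Q).map Q.mkQ : Set (V ⧸ Q))) := by
  ext s
  constructor
  · rintro ⟨⟨y, rfl⟩, hne⟩
    have hyx : y - x ∈ P ⊔ Q := (meet_iff P Q x y).mp hne
    refine ⟨Submodule.Quotient.mk y, ⟨Submodule.Quotient.mk (y - x), ?_, ?_⟩, ?_⟩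
    · exact Submodule.mem_map.mpr ⟨y - x, hyx, rfl⟩
    · show Submodule.Quotient.mk (y - x) + Submodule.Quotient.mk x = _
      rw [← Submodule.mkQ_apply, ← Submodule.mkQ_apply, ← Submodule.mkQ_apply, ← map_add]
      congr 1
      abel
    · exact (coset_eq_preimage Q y).symm
  · rintro ⟨c, ⟨c', hc', rfl⟩, rfl⟩
    obtain ⟨w, hw, rfl⟩ := Submodule.mem_map.mp hc'
    have : (Q.mkQ w + Submodule.Quotient.mk x : V ⧸ Q) = Submodule.Quotient.mk (w + x) := by
      rw [← Submodule.mkQ_apply, ← Submodule.mkQ_apply, ← map_add]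
    beta_reduce
    rw [this]
    refine ⟨⟨w + x, (coset_eq_preimage Q (w + x)).symm⟩, ?_⟩
    rw [← coset_eq_preimage, meet_iff]
    simpa using hw

/-- Cardinality of a finite module over a finite field. -/
lemma card_mod (M : Type*) [AddCommGroup M] [Module 𝔽 M] [Finite M] :
    Nat.card M = Fintype.card 𝔽 ^ Module.finrank 𝔽 M := by
  have : Fintype M := Fintype.ofFinite M
  rw [Nat.card_eq_fintype_card]
  exact Module.card_eq_pow_finrank

/-- Cardinality of a submodule of a finite module. -/
lemma card_submod {M : Type*} [AddCommGroup M] [Module 𝔽 M] [Finite M] (N : Submodule 𝔽 M) :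
    Nat.card N = Fintype.card 𝔽 ^ Module.finrank 𝔽 N :=
  card_mod (𝔽 := 𝔽) N

end Aux

/-- Valencies of the maximal totally isotropic flat scheme: for a fixed maximal
totally isotropic flat `F = P + x`, the number of flats `Q + y` meeting `F` with
`dim(P ∩ Q) = ν - i` is `q^{i(i+2e+1)/2}·[ν choose i]_q`, and the number of those
disjoint from `F` is `(q^{ν-i} - 1)·q^{i(i+2e+1)/2}·[ν choose i]_q`. -/
theorem stmt_13 {𝔽 V : Type*} [Field 𝔽] [Fintype 𝔽] [AddCommGroup V] [Module 𝔽 V]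
    [Fintype V] (q ν i : ℕ) (e : ℝ)
    (he : e = 1 ∨ e = 1/2 ∨ e = 0)
    (hq : Fintype.card 𝔽 = q) (hV : Module.finrank 𝔽 V = 2 * ν) (hi : i ≤ ν)
    (ℳ : Set (Submodule 𝔽 V))
    (hdim : ∀ P ∈ ℳ, Module.finrank 𝔽 P = ν)
    (P : Submodule 𝔽 V) (hP : P ∈ ℳ) (x : V)
    (hcount : (Nat.card {Q : Submodule 𝔽 V | Q ∈ ℳ ∧
        Module.finrank 𝔽 (P ⊓ Q : Submodule 𝔽 V) = ν - i} : ℝ)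
      = (q : ℝ) ^ ((i : ℝ) * ((i : ℝ) + 2 * e - 1) / 2) * gaussBinomR q ν i) :
    (Nat.card {T : Submodule 𝔽 V × Set V | T.1 ∈ ℳ ∧
        Module.finrank 𝔽 (P ⊓ T.1 : Submodule 𝔽 V) = ν - i ∧
        (∃ y, T.2 = (· + y) '' (T.1 : Set V)) ∧
        ((((· + x) '' (P : Set V))) ∩ T.2).Nonempty} : ℝ)
      = (q : ℝ) ^ ((i : ℝ) * ((i : ℝ) + 2 * e + 1) / 2) * gaussBinomR q ν i ∧
    (Nat.card {T : Submodule 𝔽 V × Set V | T.1 ∈ ℳ ∧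
        Module.finrank 𝔽 (P ⊓ T.1 : Submodule 𝔽 V) = ν - i ∧
        (∃ y, T.2 = (· + y) '' (T.1 : Set V)) ∧
        ¬ ((((· + x) '' (P : Set V))) ∩ T.2).Nonempty} : ℝ)
      = ((q : ℝ) ^ (ν - i) - 1) *
          ((q : ℝ) ^ ((i : ℝ) * ((i : ℝ) + 2 * e + 1) / 2) * gaussBinomR q ν i) := by
  classical
  -- basic facts
  have hq1 : 1 ≤ q := by
    rw [← hq]; exact Fintype.card_pos
  have hq0R : (0 : ℝ) < (q : ℝ) := by exact_mod_cast hq1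
  -- the set of subspaces
  set S' : Set (Submodule 𝔽 V) := {Q : Submodule 𝔽 V | Q ∈ ℳ ∧
      Module.finrank 𝔽 (P ⊓ Q : Submodule 𝔽 V) = ν - i} with hS'
  -- rank facts for Q ∈ S'
  have hrankW : ∀ Q ∈ S', Module.finrank 𝔽 (P ⊔ Q : Submodule 𝔽 V) = ν + i := by
    rintro Q ⟨hQM, hQr⟩
    have h1 := Submodule.finrank_sup_add_finrank_inf_eq P Q
    rw [hQr, hdim P hP, hdim Q hQM] at h1
    omega
  -- cardinality of the set of cosets of Q meeting P + x
  have hmeet : ∀ Q ∈ S',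
      Nat.card {s : Set V | (∃ y, s = (· + y) '' (Q : Set V)) ∧
        (((· + x) '' (P : Set V)) ∩ s).Nonempty} = q ^ i := by
    intro Q hQ
    rw [meet_cosets_eq P Q x]
    have hsurj : Function.Surjective (Submodule.Quotient.mk : V → V ⧸ Q) :=
      Submodule.Quotient.mk_surjective Q
    rw [Nat.card_image_of_injective (preimage_singleton_injective hsurj),
      Nat.card_image_of_injective (add_left_injective _)]
    have : Nat.card (((P ⊔ Q).map Q.mkQ : Submodule 𝔽 (V ⧸ Q)) : Set (V ⧸ Q)) =
        Nat.card ((P ⊔ Q).map Q.mkQ : Submodule 𝔽 (V ⧸ Q)) := rfl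
    rw [this, card_submod (𝔽 := 𝔽), hq]
    congr 1
    -- finrank of the image of P ⊔ Q in V ⧸ Q is i
    have hker : LinearMap.ker (Q.mkQ ∘ₗ (P ⊔ Q).subtype) =
        Submodule.comap (P ⊔ Q).subtype Q := by
      rw [LinearMap.ker_comp, Submodule.ker_mkQ]
    have hrange : LinearMap.range (Q.mkQ ∘ₗ (P ⊔ Q).subtype) = (P ⊔ Q).map Q.mkQ := by
      rw [LinearMap.range_comp, Submodule.range_subtype]
    have h2 := LinearMap.finrank_range_add_finrank_ker (Q.mkQ ∘ₗ (P ⊔ Q).subtype)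
    rw [hker, hrange] at h2
    have h3 : Module.finrank 𝔽 (Submodule.comap (P ⊔ Q).subtype Q) = Module.finrank 𝔽 Q :=
      (Submodule.comapSubtypeEquivOfLe le_sup_right).finrank_eq
    rw [h3, hdim Q hQ.1, hrankW Q hQ] at h2
    omega
  -- cardinality of the set of all cosets of Q
  have hall : ∀ Q ∈ S',
      Nat.card {s : Set V | ∃ y, s = (· + y) '' (Q : Set V)} = q ^ ν := by
    intro Q hQ
    have hsurj : Function.Surjective (Submodule.Quotient.mk : V → V ⧸ Q) :=
      Submodule.Quotient.mk_surjective Q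
    have hset : {s : Set V | ∃ y, s = (· + y) '' (Q : Set V)} =
        Set.range (fun c : V ⧸ Q => Submodule.Quotient.mk ⁻¹' {c}) := by
      ext s
      constructor
      · rintro ⟨y, rfl⟩
        exact ⟨Submodule.Quotient.mk y, (coset_eq_preimage Q y).symm⟩
      · rintro ⟨c, rfl⟩
        obtain ⟨y, rfl⟩ := hsurj c
        exact ⟨y, (coset_eq_preimage Q y).symm⟩
    have hrange := Nat.card_congr
      (Equiv.ofInjective _ (preimage_singleton_injective hsurj)).symm
    rw [hset, hrange, card_mod (𝔽 := 𝔽) (V ⧸ Q), hq]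
    congr 1
    have h2 := Submodule.finrank_quotient_add_finrank Q
    rw [hdim Q hQ.1, hV] at h2
    omega
  -- per-Q disjoint-coset counts
  have hdisj : ∀ Q ∈ S',
      Nat.card {s : Set V | (∃ y, s = (· + y) '' (Q : Set V)) ∧
        ¬ (((· + x) '' (P : Set V)) ∩ s).Nonempty} = q ^ ν - q ^ i := by
    intro Q hQ
    have hsub : {s : Set V | (∃ y, s = (· + y) '' (Q : Set V)) ∧
        (((· + x) '' (P : Set V)) ∩ s).Nonempty} ⊆
        {s : Set V | ∃ y, s = (· + y) '' (Q : Set V)} := fun s hs => hs.1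
    have hdiff : {s : Set V | (∃ y, s = (· + y) '' (Q : Set V)) ∧
        ¬ (((· + x) '' (P : Set V)) ∩ s).Nonempty} =
        {s : Set V | ∃ y, s = (· + y) '' (Q : Set V)} \
        {s : Set V | (∃ y, s = (· + y) '' (Q : Set V)) ∧
          (((· + x) '' (P : Set V)) ∩ s).Nonempty} := by
      ext s
      simp only [Set.mem_setOf_eq, Set.mem_diff, not_and]
      tauto
    rw [hdiff, Nat.card_coe_set_eq, Set.ncard_diff hsub (Set.toFinite _),
      ← Nat.card_coe_set_eq, ← Nat.card_coe_set_eq, hall Q hQ, hmeet Q hQ]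
  -- reorganize the sets of pairs as sigma types
  have key : ∀ (p : Set V → Prop),
      Nat.card {T : Submodule 𝔽 V × Set V | T.1 ∈ ℳ ∧
        Module.finrank 𝔽 (P ⊓ T.1 : Submodule 𝔽 V) = ν - i ∧
        (∃ y, T.2 = (· + y) '' (T.1 : Set V)) ∧ p T.2}
      = Nat.card (Σ Q : S', {s : Set V // (∃ y, s = (· + y) '' ((Q : Submodule 𝔽 V) : Set V)) ∧ p s}) := by
    intro p
    apply Nat.card_congr
    exact
      { toFun := fun T => ⟨⟨T.1.1, T.2.1, T.2.2.1⟩, ⟨T.1.2, T.2.2.2.1, T.2.2.2.2⟩⟩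
        invFun := fun T => ⟨(T.1.1, T.2.1), T.1.2.1, T.1.2.2, T.2.2.1, T.2.2.2⟩
        left_inv := fun T => rfl
        right_inv := fun T => rfl }
  -- count the sigma types
  have hcard1 : Nat.card {T : Submodule 𝔽 V × Set V | T.1 ∈ ℳ ∧
        Module.finrank 𝔽 (P ⊓ T.1 : Submodule 𝔽 V) = ν - i ∧
        (∃ y, T.2 = (· + y) '' (T.1 : Set V)) ∧
        ((((· + x) '' (P : Set V))) ∩ T.2).Nonempty}
      = Nat.card S' * q ^ i := by
    rw [key (fun s => (((· + x) '' (P : Set V)) ∩ s).Nonempty)]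
    have e1 : (Σ Q : S', {s : Set V // (∃ y, s = (· + y) '' ((Q : Submodule 𝔽 V) : Set V)) ∧
        (((· + x) '' (P : Set V)) ∩ s).Nonempty}) ≃ S' × Fin (q ^ i) := by
      refine (Equiv.sigmaCongrRight fun Q => ?_).trans (Equiv.sigmaEquivProd _ _)
      exact Finite.equivFinOfCardEq (hmeet Q Q.2)
    rw [Nat.card_congr e1, Nat.card_prod]
    simp
  have hcard2 : Nat.card {T : Submodule 𝔽 V × Set V | T.1 ∈ ℳ ∧
        Module.finrank 𝔽 (P ⊓ T.1 : Submodule 𝔽 V) = ν - i ∧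
        (∃ y, T.2 = (· + y) '' (T.1 : Set V)) ∧
        ¬ ((((· + x) '' (P : Set V))) ∩ T.2).Nonempty}
      = Nat.card S' * (q ^ ν - q ^ i) := by
    rw [key (fun s => ¬ (((· + x) '' (P : Set V)) ∩ s).Nonempty)]
    have e1 : (Σ Q : S', {s : Set V // (∃ y, s = (· + y) '' ((Q : Submodule 𝔽 V) : Set V)) ∧
        ¬ (((· + x) '' (P : Set V)) ∩ s).Nonempty}) ≃ S' × Fin (q ^ ν - q ^ i) := by
      refine (Equiv.sigmaCongrRight fun Q => ?_).trans (Equiv.sigmaEquivProd _ _)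
      exact Finite.equivFinOfCardEq (hdisj Q Q.2)
    rw [Nat.card_congr e1, Nat.card_prod]
    simp
  -- real arithmetic
  have hpow : (q : ℝ) ^ ((i : ℝ) * ((i : ℝ) + 2 * e - 1) / 2) * (q : ℝ) ^ i
      = (q : ℝ) ^ ((i : ℝ) * ((i : ℝ) + 2 * e + 1) / 2) := by
    rw [← Real.rpow_natCast (q : ℝ) i, ← Real.rpow_add hq0R]
    congr 1
    ring
  have hple : q ^ i ≤ q ^ ν := Nat.pow_le_pow_right hq1 hi
  constructor
  · rw [hcard1]
    push_cast
    rw [hcount, ← hpow]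
    ring
  · rw [hcard2]
    push_cast [hple]
    rw [hcount, ← hpow]
    have hsplit : (q : ℝ) ^ ν - (q : ℝ) ^ i = ((q : ℝ) ^ (ν - i) - 1) * (q : ℝ) ^ i := by
      rw [sub_mul, one_mul, ← pow_add]
      congr 2
      omega
    rw [hsplit]
    ring
end
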